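/- Let R be a field of characteristic 3, V a vector space over R of dimension ≥ 2, and x, y linearly independent vectors. Then every permutation of the harmonic subset {⟨x⟩, ⟨y⟩, ⟨x+y⟩, ⟨x−y⟩} ⊂ P(V) extends to an element of PGL(V). -/

import Mathlib

open scoped Classical in
/-- Any `2×2` involutive matrix acting on a linearly independent pair extends to a
linear automorphism of `V` (acting as the identity on a complement). -/
lemma mk_equiv_aux {K V : Type*} [Field K] [AddCommGroup V] [Module K V]
    (x y : V) (hxy : LinearIndependent K ![x, y]) (a b c d : K)
    (h1 : a*a + b*c = 1) (h2 : a*b + b*d = 0) (h3 : c*a + d*c = 0) (h4 : c*b + d*d = 1) :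
    ∃ u : V ≃ₗ[K] V, u x = a•x + b•y ∧ u y = c•x + d•y := by
  have hne : x ≠ y := by
    intro h
    have := hxy.injective (by simp [h] : (![x,y]) 0 = (![x,y]) 1)
    simp at this
  have hs : LinearIndepOn K id (Set.range ![x,y]) := (linearIndepOn_id_range_iff hxy.injective).mpr hxy
  set B := Module.Basis.extend hs with hB
  have hrange : Set.range ![x,y] ⊆ hs.extend (Set.subset_univ _) := hs.subset_extend _
  have hxmem : x ∈ hs.extend (Set.subset_univ _) := hrange ⟨0, rfl⟩
  have hymem : y ∈ hs.extend (Set.subset_univ _) := hrange ⟨1, rfl⟩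
  set g : hs.extend (Set.subset_univ _) → V :=
    fun i => if (i:V) = x then a•x + b•y else if (i:V) = y then c•x + d•y else i with hg
  set f : V →ₗ[K] V := B.constr K g with hf
  have key : ∀ i, f (B i) = g i := fun i => B.constr_basis K g i
  have hBa : ∀ i, B i = (i : V) := Module.Basis.extend_apply_self hs
  have hfx : f x = a•x + b•y := by
    have h := key ⟨x, hxmem⟩
    rw [hBa] at h
    rwa [show g ⟨x, hxmem⟩ = a•x + b•y by simp [hg]] at h
  have hfy : f y = c•x + d•y := by
    have h := key ⟨y, hymem⟩
    rw [hBa] at h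
    rwa [show g ⟨y, hymem⟩ = c•x + d•y by simp [hg, hne.symm]] at h
  have hff : f.comp f = LinearMap.id := by
    apply B.ext
    intro i
    rw [LinearMap.comp_apply, key, LinearMap.id_apply, hBa]
    rcases eq_or_ne (i:V) x with h | hx
    · rw [show g i = a•x + b•y by simp [hg, h], h, map_add, map_smul, map_smul, hfx, hfy]
      match_scalars
      · linear_combination h1
      · linear_combination h2
    · rcases eq_or_ne (i:V) y with h | hy
      · rw [show g i = c•x + d•y by simp [hg, h, hne.symm], h,
          map_add, map_smul, map_smul, hfx, hfy]
        match_scalars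
        · linear_combination h3
        · linear_combination h4
      · have hgi : g i = (i:V) := by simp [hg, hx, hy]
        rw [hgi]
        have h := key i
        rwa [hBa, hgi] at h
  exact ⟨LinearEquiv.ofLinear f f hff hff, hfx, hfy⟩

/-- Example 2: If `char R = 3` and `x, y` are linearly independent,
then every permutation of the harmonic subset
`{⟨x⟩, ⟨y⟩, ⟨x+y⟩, ⟨x−y⟩}` of `P(V)` extends to an element of `PGL(V)`. -/
theorem stmt8 {K V : Type*} [Field K] [AddCommGroup V] [Module K V]
    [FiniteDimensional K V] (hdim : 2 ≤ Module.finrank K V)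
    (hchar : ringChar K = 3)
    (x y : V) (hxy : LinearIndependent K ![x, y])
    (𝒳 : Set (Submodule K V))
    (h𝒳 : 𝒳 = {Submodule.span K {x}, Submodule.span K {y},
      Submodule.span K {x + y}, Submodule.span K {x - y}})
    (s : Equiv.Perm 𝒳) :
    ∃ u : V ≃ₗ[K] V, ∀ P : 𝒳,
      Submodule.map (u : V →ₗ[K] V) (P : Submodule K V) = (s P : Submodule K V) := by
  classical
  have h3K : (3 : K) = 0 := by
    have : CharP K 3 := hchar ▸ ringChar.charP K
    exact_mod_cast CharP.cast_eq_zero K 3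
  set A := Submodule.span K {x} with hA
  set B := Submodule.span K {y} with hB
  set C := Submodule.span K {x + y} with hC
  set D := Submodule.span K {x - y} with hD
  have hmem : ∀ P : 𝒳, (P : Submodule K V) = A ∨ (P : Submodule K V) = B ∨
      (P : Submodule K V) = C ∨ (P : Submodule K V) = D := by
    intro P
    have : (P : Submodule K V) ∈ ({A, B, C, D} : Set (Submodule K V)) := by
      rw [← h𝒳]; exact P.2
    simpa using this
  have hmapspan : ∀ (u : V ≃ₗ[K] V) (v : V),
      Submodule.map (u : V →ₗ[K] V) (Submodule.span K {v}) = Submodule.span K {u v} := by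
    intro u v
    rw [Submodule.map_span, Set.image_singleton]
    rfl
  have hsmul : ∀ v : V, Submodule.span K {(-1 : K) • v} = Submodule.span K {v} :=
    fun v => Submodule.span_singleton_smul_eq (isUnit_one.neg) v
  -- the subgroup of realizable permutations
  set Sub : Subgroup (Equiv.Perm 𝒳) :=
    { carrier := {σ | ∃ u : V ≃ₗ[K] V, ∀ P : 𝒳,
        Submodule.map (u : V →ₗ[K] V) (P : Submodule K V) = (σ P : Submodule K V)},
      one_mem' := ⟨LinearEquiv.refl K V, fun P => by simp⟩,
      mul_mem' := by
        rintro σ τ ⟨u, hu⟩ ⟨w, hw⟩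
        refine ⟨w.trans u, fun P => ?_⟩
        have : ((w.trans u : V ≃ₗ[K] V) : V →ₗ[K] V)
            = (u : V →ₗ[K] V).comp (w : V →ₗ[K] V) := rfl
        rw [this, Submodule.map_comp, hw P, hu (τ P)]
        rfl
      inv_mem' := by
        rintro σ ⟨u, hu⟩
        refine ⟨u.symm, fun P => ?_⟩
        have h := hu (σ⁻¹ P)
        rw [show σ (σ⁻¹ P) = P from σ.apply_symm_apply P] at h
        rw [← h, ← Submodule.map_comp]
        simp } with hSub
  have hsw : ∀ (u : V ≃ₗ[K] V) (M N : Submodule K V),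
      Submodule.map (u : V →ₗ[K] V) M = N → Submodule.map (u : V →ₗ[K] V) N = M →
      (∀ P : 𝒳, (P : Submodule K V) ≠ M → (P : Submodule K V) ≠ N →
        Submodule.map (u : V →ₗ[K] V) (P : Submodule K V) = (P : Submodule K V)) →
      ∀ p q : 𝒳, (p : Submodule K V) = M → (q : Submodule K V) = N →
      Equiv.swap p q ∈ Sub := by
    intro u M N hMN hNM hfix p q hp hq
    refine ⟨u, fun P => ?_⟩
    rcases eq_or_ne P p with rfl | h1
    · rw [Equiv.swap_apply_left, hp, hq]; exact hMN
    rcases eq_or_ne P q with rfl | h2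
    · rw [Equiv.swap_apply_right, hq, hp]; exact hNM
    · rw [Equiv.swap_apply_of_ne_of_ne h1 h2]
      exact hfix P (fun h => h1 (Subtype.ext (h.trans hp.symm)))
        (fun h => h2 (Subtype.ext (h.trans hq.symm)))
  -- six involutions realizing the six transpositions
  -- u1 : swaps A B
  obtain ⟨u1, h1x, h1y⟩ := mk_equiv_aux x y hxy 0 1 1 0
    (by norm_num) (by norm_num) (by norm_num) (by norm_num)
  have m1A : Submodule.map (u1 : V →ₗ[K] V) A = B := by
    rw [hA, hmapspan, h1x, show (0:K)•x + (1:K)•y = y by module]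
  have m1B : Submodule.map (u1 : V →ₗ[K] V) B = A := by
    rw [hB, hmapspan, h1y, show (1:K)•x + (0:K)•y = x by module]
  have m1C : Submodule.map (u1 : V →ₗ[K] V) C = C := by
    rw [hC, hmapspan, map_add, h1x, h1y,
      show ((0:K)•x + (1:K)•y) + ((1:K)•x + (0:K)•y) = x + y by module]
  have m1D : Submodule.map (u1 : V →ₗ[K] V) D = D := by
    rw [hD, hmapspan, map_sub, h1x, h1y,
      show ((0:K)•x + (1:K)•y) - ((1:K)•x + (0:K)•y) = (-1:K)•(x - y) by module, hsmul]
  -- u2 : swaps A C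
  obtain ⟨u2, h2x, h2y⟩ := mk_equiv_aux x y hxy 1 1 0 (-1)
    (by norm_num) (by norm_num) (by norm_num) (by norm_num)
  have m2A : Submodule.map (u2 : V →ₗ[K] V) A = C := by
    rw [hA, hmapspan, h2x, show (1:K)•x + (1:K)•y = x + y by module]
  have m2C : Submodule.map (u2 : V →ₗ[K] V) C = A := by
    rw [hC, hmapspan, map_add, h2x, h2y,
      show ((1:K)•x + (1:K)•y) + ((0:K)•x + (-1:K)•y) = x by module]
  have m2B : Submodule.map (u2 : V →ₗ[K] V) B = B := by
    rw [hB, hmapspan, h2y, show (0:K)•x + (-1:K)•y = (-1:K)•y by module, hsmul]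
  have m2D : Submodule.map (u2 : V →ₗ[K] V) D = D := by
    rw [hD, hmapspan, map_sub, h2x, h2y,
      show ((1:K)•x + (1:K)•y) - ((0:K)•x + (-1:K)•y) = x - y by
        match_scalars <;> first | ring1 | linear_combination h3K | linear_combination -h3K | linear_combination 2*h3K | linear_combination -2*h3K]
  -- u3 : swaps A D
  obtain ⟨u3, h3x, h3y⟩ := mk_equiv_aux x y hxy 1 (-1) 0 (-1)
    (by norm_num) (by norm_num) (by norm_num) (by norm_num)
  have m3A : Submodule.map (u3 : V →ₗ[K] V) A = D := by
    rw [hA, hmapspan, h3x, show (1:K)•x + (-1:K)•y = x - y by module]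
  have m3D : Submodule.map (u3 : V →ₗ[K] V) D = A := by
    rw [hD, hmapspan, map_sub, h3x, h3y,
      show ((1:K)•x + (-1:K)•y) - ((0:K)•x + (-1:K)•y) = x by module]
  have m3B : Submodule.map (u3 : V →ₗ[K] V) B = B := by
    rw [hB, hmapspan, h3y, show (0:K)•x + (-1:K)•y = (-1:K)•y by module, hsmul]
  have m3C : Submodule.map (u3 : V →ₗ[K] V) C = C := by
    rw [hC, hmapspan, map_add, h3x, h3y,
      show ((1:K)•x + (-1:K)•y) + ((0:K)•x + (-1:K)•y) = x + y by
        match_scalars <;> first | ring1 | linear_combination h3K | linear_combination -h3K | linear_combination 2*h3K | linear_combination -2*h3K]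
  -- u4 : swaps B C
  obtain ⟨u4, h4x, h4y⟩ := mk_equiv_aux x y hxy (-1) 0 1 1
    (by norm_num) (by norm_num) (by norm_num) (by norm_num)
  have m4B : Submodule.map (u4 : V →ₗ[K] V) B = C := by
    rw [hB, hmapspan, h4y, show (1:K)•x + (1:K)•y = x + y by module]
  have m4C : Submodule.map (u4 : V →ₗ[K] V) C = B := by
    rw [hC, hmapspan, map_add, h4x, h4y,
      show ((-1:K)•x + (0:K)•y) + ((1:K)•x + (1:K)•y) = y by module]
  have m4A : Submodule.map (u4 : V →ₗ[K] V) A = A := by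
    rw [hA, hmapspan, h4x, show (-1:K)•x + (0:K)•y = (-1:K)•x by module, hsmul]
  have m4D : Submodule.map (u4 : V →ₗ[K] V) D = D := by
    rw [hD, hmapspan, map_sub, h4x, h4y,
      show ((-1:K)•x + (0:K)•y) - ((1:K)•x + (1:K)•y) = x - y by
        match_scalars <;> first | ring1 | linear_combination h3K | linear_combination -h3K | linear_combination 2*h3K | linear_combination -2*h3K]
  -- u5 : swaps B D
  obtain ⟨u5, h5x, h5y⟩ := mk_equiv_aux x y hxy 1 0 1 (-1)
    (by norm_num) (by norm_num) (by norm_num) (by norm_num)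
  have m5B : Submodule.map (u5 : V →ₗ[K] V) B = D := by
    rw [hB, hmapspan, h5y, show (1:K)•x + (-1:K)•y = x - y by module]
  have m5D : Submodule.map (u5 : V →ₗ[K] V) D = B := by
    rw [hD, hmapspan, map_sub, h5x, h5y,
      show ((1:K)•x + (0:K)•y) - ((1:K)•x + (-1:K)•y) = y by module]
  have m5A : Submodule.map (u5 : V →ₗ[K] V) A = A := by
    rw [hA, hmapspan, h5x, show (1:K)•x + (0:K)•y = x by module]
  have m5C : Submodule.map (u5 : V →ₗ[K] V) C = C := by
    rw [hC, hmapspan, map_add, h5x, h5y,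
      show ((1:K)•x + (0:K)•y) + ((1:K)•x + (-1:K)•y) = (-1:K)•(x + y) by
        match_scalars <;> first | ring1 | linear_combination h3K | linear_combination -h3K | linear_combination 2*h3K | linear_combination -2*h3K, hsmul]
  -- u6 : swaps C D
  obtain ⟨u6, h6x, h6y⟩ := mk_equiv_aux x y hxy 1 0 0 (-1)
    (by norm_num) (by norm_num) (by norm_num) (by norm_num)
  have m6C : Submodule.map (u6 : V →ₗ[K] V) C = D := by
    rw [hC, hmapspan, map_add, h6x, h6y,
      show ((1:K)•x + (0:K)•y) + ((0:K)•x + (-1:K)•y) = x - y by module]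
  have m6D : Submodule.map (u6 : V →ₗ[K] V) D = C := by
    rw [hD, hmapspan, map_sub, h6x, h6y,
      show ((1:K)•x + (0:K)•y) - ((0:K)•x + (-1:K)•y) = x + y by module]
  have m6A : Submodule.map (u6 : V →ₗ[K] V) A = A := by
    rw [hA, hmapspan, h6x, show (1:K)•x + (0:K)•y = x by module]
  have m6B : Submodule.map (u6 : V →ₗ[K] V) B = B := by
    rw [hB, hmapspan, h6y, show (0:K)•x + (-1:K)•y = (-1:K)•y by module, hsmul]
  -- fixing lemmas
  have f1 : ∀ P : 𝒳, (P : Submodule K V) ≠ A → (P : Submodule K V) ≠ B →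
      Submodule.map (u1 : V →ₗ[K] V) (P : Submodule K V) = (P : Submodule K V) := by
    intro P p1 p2
    rcases hmem P with h|h|h|h
    · exact absurd h p1
    · exact absurd h p2
    · rw [h]; exact m1C
    · rw [h]; exact m1D
  have f2 : ∀ P : 𝒳, (P : Submodule K V) ≠ A → (P : Submodule K V) ≠ C →
      Submodule.map (u2 : V →ₗ[K] V) (P : Submodule K V) = (P : Submodule K V) := by
    intro P p1 p2
    rcases hmem P with h|h|h|h
    · exact absurd h p1
    · rw [h]; exact m2B
    · exact absurd h p2
    · rw [h]; exact m2D
  have f3 : ∀ P : 𝒳, (P : Submodule K V) ≠ A → (P : Submodule K V) ≠ D →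
      Submodule.map (u3 : V →ₗ[K] V) (P : Submodule K V) = (P : Submodule K V) := by
    intro P p1 p2
    rcases hmem P with h|h|h|h
    · exact absurd h p1
    · rw [h]; exact m3B
    · rw [h]; exact m3C
    · exact absurd h p2
  have f4 : ∀ P : 𝒳, (P : Submodule K V) ≠ B → (P : Submodule K V) ≠ C →
      Submodule.map (u4 : V →ₗ[K] V) (P : Submodule K V) = (P : Submodule K V) := by
    intro P p1 p2
    rcases hmem P with h|h|h|h
    · rw [h]; exact m4A
    · exact absurd h p1
    · exact absurd h p2
    · rw [h]; exact m4D
  have f5 : ∀ P : 𝒳, (P : Submodule K V) ≠ B → (P : Submodule K V) ≠ D →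
      Submodule.map (u5 : V →ₗ[K] V) (P : Submodule K V) = (P : Submodule K V) := by
    intro P p1 p2
    rcases hmem P with h|h|h|h
    · rw [h]; exact m5A
    · exact absurd h p1
    · rw [h]; exact m5C
    · exact absurd h p2
  have f6 : ∀ P : 𝒳, (P : Submodule K V) ≠ C → (P : Submodule K V) ≠ D →
      Submodule.map (u6 : V →ₗ[K] V) (P : Submodule K V) = (P : Submodule K V) := by
    intro P p1 p2
    rcases hmem P with h|h|h|h
    · rw [h]; exact m6A
    · rw [h]; exact m6B
    · exact absurd h p1
    · exact absurd h p2
  have sw1 := hsw u1 A B m1A m1B f1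
  have sw2 := hsw u2 A C m2A m2C f2
  have sw3 := hsw u3 A D m3A m3D f3
  have sw4 := hsw u4 B C m4B m4C f4
  have sw5 := hsw u5 B D m5B m5D f5
  have sw6 := hsw u6 C D m6C m6D f6
  -- every swap is realizable
  have hswap : ∀ σ : Equiv.Perm 𝒳, σ.IsSwap → σ ∈ Sub := by
    rintro σ ⟨p, q, hpq, rfl⟩
    rcases hmem p with hp|hp|hp|hp <;> rcases hmem q with hq|hq|hq|hq
    · exact absurd (Subtype.ext (hp.trans hq.symm)) hpq
    · exact sw1 p q hp hq
    · exact sw2 p q hp hq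
    · exact sw3 p q hp hq
    · rw [Equiv.swap_comm]; exact sw1 q p hq hp
    · exact absurd (Subtype.ext (hp.trans hq.symm)) hpq
    · exact sw4 p q hp hq
    · exact sw5 p q hp hq
    · rw [Equiv.swap_comm]; exact sw2 q p hq hp
    · rw [Equiv.swap_comm]; exact sw4 q p hq hp
    · exact absurd (Subtype.ext (hp.trans hq.symm)) hpq
    · exact sw6 p q hp hq
    · rw [Equiv.swap_comm]; exact sw3 q p hq hp
    · rw [Equiv.swap_comm]; exact sw5 q p hq hp
    · rw [Equiv.swap_comm]; exact sw6 q p hq hp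
    · exact absurd (Subtype.ext (hp.trans hq.symm)) hpq
  -- conclude: swaps generate the full permutation group
  haveI : Finite ↥𝒳 := by
    rw [h𝒳]
    exact ((((Set.finite_singleton D).insert C).insert B).insert A).to_subtype
  have hTop := Equiv.Perm.closure_isSwap (α := ↥𝒳)
  have hs' : s ∈ Subgroup.closure {σ : Equiv.Perm ↥𝒳 | σ.IsSwap} :=
    hTop ▸ Subgroup.mem_top s
  have : s ∈ Sub := (Subgroup.closure_le Sub).mpr (fun σ hσ => hswap σ hσ) hs'
  obtain ⟨u, hu⟩ := this
  exact ⟨u, hu⟩
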